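/- arXiv:2302.09235 — 2 statements merged into one kernel-verified Lean document; each statement's English description precedes it below -/
import Mathlib

section
/- (Iterates-norm bound.) Suppose the loss is self-bounded (|f'(u)| ≤ f(u)) and the gradient-descent iterates satisfy the descent condition F̂(w_{t+1}) ≤ F̂(w_t) − (η/2)‖∇F̂(w_t)‖² for all t ≥ 0. Fix T ≥ 1 and suppose w ∈ ℝ^{md} and the width m satisfy ‖w − w_0‖² ≥ max{η·T·F̂(w), η·F̂(w_0)} and √m ≥ 18·L·R²·‖w − w_0‖². Then ‖w_t − w‖ ≤ 3‖w − w_0‖ for all t ∈ {1,…,T}. -/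
open scoped BigOperators

/-- Two-layer network `Φ(w,x) = (1/√m) ∑_j a_j σ(⟨w_j, x⟩)`. -/
noncomputable def Phi {m d : ℕ} (a : Fin m → ℝ) (σ : ℝ → ℝ)
    (w : EuclideanSpace ℝ (Fin m × Fin d)) (x : EuclideanSpace ℝ (Fin d)) : ℝ :=
  (1 / Real.sqrt m) * ∑ j : Fin m, a j * σ (∑ i : Fin d, w (j, i) * x i)

/-- Empirical loss `F̂(w) = (1/n) ∑_i f(y_i Φ(w, x_i))`. -/
noncomputable def empLoss {m d n : ℕ} (a : Fin m → ℝ) (σ f : ℝ → ℝ)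
    (x : Fin n → EuclideanSpace ℝ (Fin d)) (y : Fin n → ℝ)
    (w : EuclideanSpace ℝ (Fin m × Fin d)) : ℝ :=
  (1 / (n : ℝ)) * ∑ i : Fin n, f (y i * Phi a σ w (x i))

open scoped RealInnerProductSpace

/-! ### Auxiliary machinery -/

lemma scalar_core {g g' g'' : ℝ → ℝ} {c : ℝ} (hc0 : 0 ≤ c) (hc : c ≤ 1/2)
    (hg : ∀ α, HasDerivAt g (g' α) α) (hg' : ∀ α, HasDerivAt g' (g'' α) α)
    (hgnn : ∀ α, 0 ≤ g α) (hweak : ∀ α, -(c * g α) ≤ g'' α) :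
    g 1 - g 0 - (g 0 + g 1) ≤ g' 1 := by
  have hgd : Differentiable ℝ g := fun α => (hg α).differentiableAt
  have hgd' : Differentiable ℝ g' := fun α => (hg' α).differentiableAt
  have hgc : Continuous g := hgd.continuous
  have hgc' : Continuous g' := hgd'.continuous
  obtain ⟨α₀, hα₀, hmax⟩ := isCompact_Icc.exists_isMaxOn
    (Set.nonempty_Icc.mpr (by norm_num : (0:ℝ) ≤ 1)) hgc.continuousOn
  set M := g α₀ with hMdef
  have hMle : ∀ β ∈ Set.Icc (0:ℝ) 1, g β ≤ M := fun β hβ => hmax hβ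
  have hM0 : 0 ≤ M := hgnn α₀
  set K := c * M with hKdef
  have hK0 : 0 ≤ K := mul_nonneg hc0 hM0
  have hconv : ConvexOn ℝ (Set.Icc (0:ℝ) 1) (fun α => g α + K/2 * α^2) := by
    apply convexOn_of_hasDerivWithinAt2_nonneg (f' := fun α => g' α + K * α)
      (f'' := fun α => g'' α + K) (convex_Icc 0 1)
    · exact (hgc.add (continuous_const.mul (continuous_pow 2))).continuousOn
    · intro β _
      have h2 : HasDerivAt (fun α : ℝ => K/2 * α^2) (K/2 * (2*β^1)) β :=
        (hasDerivAt_pow 2 β).const_mul (K/2)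
      have h3 : HasDerivAt (fun α => g α + K/2 * α^2) (g' β + K * β) β := by
        exact ((hg β).add h2).congr_deriv (show g' β + K/2 * (2*β^1) = g' β + K * β by ring)
      exact h3.hasDerivWithinAt
    · intro β _
      have h2 : HasDerivAt (fun α : ℝ => K * α) (K * 1) β := (hasDerivAt_id β).const_mul K
      have h3 : HasDerivAt (fun α => g' α + K * α) (g'' β + K) β := by
        exact ((hg' β).add h2).congr_deriv (show g'' β + K * 1 = g'' β + K by ring)
      exact h3.hasDerivWithinAt
    · intro β hβ
      have hβ' : β ∈ Set.Icc (0:ℝ) 1 := interior_subset hβ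
      have h1 := hweak β
      have h2 := hMle β hβ'
      nlinarith [mul_nonneg hc0 (sub_nonneg.mpr h2)]
  have hMbound : M ≤ g 0 + g 1 + K/8 := by
    have h01 : (0:ℝ) ∈ Set.Icc (0:ℝ) 1 := by norm_num
    have h11 : (1:ℝ) ∈ Set.Icc (0:ℝ) 1 := by norm_num
    have hcv := hconv.2 h01 h11 (by linarith [hα₀.2] : (0:ℝ) ≤ 1 - α₀) hα₀.1 (by ring)
    simp only [smul_eq_mul] at hcv
    have e : (1-α₀)*0 + α₀*1 = α₀ := by ring
    rw [e] at hcv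
    have h0 := hgnn 0
    have h1 := hgnn 1
    nlinarith [hα₀.1, hα₀.2, sq_nonneg (1/2 - α₀)]
  have hM2 : M ≤ 2*(g 0 + g 1) := by nlinarith [hgnn 0, hgnn 1]
  obtain ⟨ξ, hξ, hslope⟩ := exists_hasDerivAt_eq_slope g g' (by norm_num : (0:ℝ) < 1)
    hgc.continuousOn (fun β _ => hg β)
  obtain ⟨ζ, hζ, hslope2⟩ := exists_hasDerivAt_eq_slope g' g'' hξ.2
    hgc'.continuousOn (fun β _ => hg' β)
  have hζIcc : ζ ∈ Set.Icc (0:ℝ) 1 := ⟨(lt_trans hξ.1 hζ.1).le, hζ.2.le⟩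
  have h1 : -K ≤ g'' ζ := by
    have ha := hweak ζ
    have hb := hMle ζ hζIcc
    nlinarith [mul_nonneg hc0 (sub_nonneg.mpr hb)]
  have hKK : K ≤ g 0 + g 1 := by nlinarith [hgnn 0, hgnn 1]
  have hξ1 : 0 < 1 - ξ := by linarith [hξ.2]
  have h2 : g' 1 - g' ξ = g'' ζ * (1 - ξ) := by
    field_simp at hslope2
    linarith [hslope2]
  have hslope' : g' ξ = g 1 - g 0 := by
    rw [hslope]; norm_num
  nlinarith [mul_le_mul_of_nonneg_right h1 hξ1.le, mul_nonneg hK0 hξ.1.le]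

noncomputable section IterAux

/-- `⟨v_j, x⟩` -/
def lin {m d : ℕ} (x : EuclideanSpace ℝ (Fin d)) (v : EuclideanSpace ℝ (Fin m × Fin d))
    (j : Fin m) : ℝ := ∑ k : Fin d, v (j, k) * x k

def sfun {m d : ℕ} (x : EuclideanSpace ℝ (Fin d)) (w v : EuclideanSpace ℝ (Fin m × Fin d))
    (j : Fin m) (α : ℝ) : ℝ := lin x w j + α * lin x v j

def Z {m d n : ℕ} (a : Fin m → ℝ) (τ : ℝ → ℝ) (x : Fin n → EuclideanSpace ℝ (Fin d))
    (y : Fin n → ℝ) (w v : EuclideanSpace ℝ (Fin m × Fin d)) (i : Fin n) (α : ℝ) : ℝ :=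
  y i * ((1 / Real.sqrt m) * ∑ j : Fin m, a j * τ (sfun (x i) w v j α))

def Z1 {m d n : ℕ} (a : Fin m → ℝ) (τ : ℝ → ℝ) (x : Fin n → EuclideanSpace ℝ (Fin d))
    (y : Fin n → ℝ) (w v : EuclideanSpace ℝ (Fin m × Fin d)) (i : Fin n) (α : ℝ) : ℝ :=
  y i * ((1 / Real.sqrt m) * ∑ j : Fin m, a j * (τ (sfun (x i) w v j α) * lin (x i) v j))

def Z2 {m d n : ℕ} (a : Fin m → ℝ) (τ : ℝ → ℝ) (x : Fin n → EuclideanSpace ℝ (Fin d))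
    (y : Fin n → ℝ) (w v : EuclideanSpace ℝ (Fin m × Fin d)) (i : Fin n) (α : ℝ) : ℝ :=
  y i * ((1 / Real.sqrt m) *
    ∑ j : Fin m, a j * (τ (sfun (x i) w v j α) * lin (x i) v j * lin (x i) v j))

def GG {m d n : ℕ} (a : Fin m → ℝ) (σ f : ℝ → ℝ) (x : Fin n → EuclideanSpace ℝ (Fin d))
    (y : Fin n → ℝ) (w v : EuclideanSpace ℝ (Fin m × Fin d)) (α : ℝ) : ℝ :=
  (1 / (n : ℝ)) * ∑ i : Fin n, f (Z a σ x y w v i α)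

def GG1 {m d n : ℕ} (a : Fin m → ℝ) (σ f : ℝ → ℝ) (x : Fin n → EuclideanSpace ℝ (Fin d))
    (y : Fin n → ℝ) (w v : EuclideanSpace ℝ (Fin m × Fin d)) (α : ℝ) : ℝ :=
  (1 / (n : ℝ)) * ∑ i : Fin n, deriv f (Z a σ x y w v i α) * Z1 a (deriv σ) x y w v i α

def GG2 {m d n : ℕ} (a : Fin m → ℝ) (σ f : ℝ → ℝ) (x : Fin n → EuclideanSpace ℝ (Fin d))
    (y : Fin n → ℝ) (w v : EuclideanSpace ℝ (Fin m × Fin d)) (α : ℝ) : ℝ :=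
  (1 / (n : ℝ)) * ∑ i : Fin n,
    (deriv (deriv f) (Z a σ x y w v i α) * Z1 a (deriv σ) x y w v i α
        * Z1 a (deriv σ) x y w v i α
      + deriv f (Z a σ x y w v i α) * Z2 a (deriv (deriv σ)) x y w v i α)

variable {m d n : ℕ} {a : Fin m → ℝ} {σ f τ : ℝ → ℝ}
  {x : Fin n → EuclideanSpace ℝ (Fin d)} {y : Fin n → ℝ}
  {w v : EuclideanSpace ℝ (Fin m × Fin d)}

lemma hasDerivAt_sfun (x0 : EuclideanSpace ℝ (Fin d)) (j : Fin m) (α : ℝ) :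
    HasDerivAt (sfun x0 w v j) (lin x0 v j) α := by
  unfold sfun
  simpa using ((hasDerivAt_id α).mul_const (lin x0 v j)).const_add (lin x0 w j)

lemma hasDerivAt_Z (hσ : Differentiable ℝ τ) (i : Fin n) (α : ℝ) :
    HasDerivAt (Z a τ x y w v i) (Z1 a (deriv τ) x y w v i α) α := by
  unfold Z Z1
  exact HasDerivAt.const_mul _ (HasDerivAt.const_mul _ (HasDerivAt.fun_sum fun j _ =>
    HasDerivAt.const_mul _ (((hσ _).hasDerivAt.comp α (hasDerivAt_sfun (x i) j α)))))

lemma hasDerivAt_Z1 (hτ : Differentiable ℝ τ) (i : Fin n) (α : ℝ) :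
    HasDerivAt (Z1 a τ x y w v i) (Z2 a (deriv τ) x y w v i α) α := by
  unfold Z1 Z2
  exact HasDerivAt.const_mul _ (HasDerivAt.const_mul _ (HasDerivAt.fun_sum fun j _ =>
    HasDerivAt.const_mul _
      (((hτ _).hasDerivAt.comp α (hasDerivAt_sfun (x i) j α)).mul_const _)))

lemma hasDerivAt_GG (hfd : Differentiable ℝ f) (hσd : Differentiable ℝ σ) (α : ℝ) :
    HasDerivAt (GG a σ f x y w v) (GG1 a σ f x y w v α) α := by
  unfold GG GG1
  exact HasDerivAt.const_mul _ (HasDerivAt.fun_sum fun i _ =>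
    (hfd _).hasDerivAt.comp α (hasDerivAt_Z hσd i α))

lemma hasDerivAt_GG1 (hfd : Differentiable ℝ f) (hfd' : Differentiable ℝ (deriv f))
    (hσd : Differentiable ℝ σ) (hσd' : Differentiable ℝ (deriv σ)) (α : ℝ) :
    HasDerivAt (GG1 a σ f x y w v) (GG2 a σ f x y w v α) α := by
  unfold GG1 GG2
  exact HasDerivAt.const_mul _ (HasDerivAt.fun_sum fun i _ =>
    ((hfd' _).hasDerivAt.comp α (hasDerivAt_Z hσd i α)).mul (hasDerivAt_Z1 hσd' i α))

lemma GG_eq (α : ℝ) : GG a σ f x y w v α = empLoss a σ f x y (w + α • v) := by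
  have harg : ∀ (i : Fin n) (j : Fin m),
      (∑ k : Fin d, (w + α • v) (j, k) * (x i) k) = sfun (x i) w v j α := by
    intro i j
    unfold sfun lin
    rw [Finset.mul_sum, ← Finset.sum_add_distrib]
    refine Finset.sum_congr rfl fun k _ => ?_
    simp only [PiLp.add_apply, PiLp.smul_apply, smul_eq_mul]
    ring
  unfold GG empLoss Z Phi
  simp only [harg]

lemma GG_nonneg (hfnn : ∀ u, 0 ≤ f u) (α : ℝ) : 0 ≤ GG a σ f x y w v α := by
  unfold GG
  exact mul_nonneg (by positivity) (Finset.sum_nonneg fun i _ => hfnn _)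

lemma sum_lin_sq {R : ℝ} (x0 : EuclideanSpace ℝ (Fin d)) (hx0 : ‖x0‖ ≤ R)
    (v : EuclideanSpace ℝ (Fin m × Fin d)) :
    ∑ j : Fin m, (lin x0 v j)^2 ≤ R^2 * ‖v‖^2 := by
  have hxx : ∑ k : Fin d, (x0 k)^2 = ‖x0‖^2 := by
    rw [EuclideanSpace.norm_eq, Real.sq_sqrt (by positivity)]
    refine Finset.sum_congr rfl fun k _ => ?_
    rw [Real.norm_eq_abs, sq_abs]
  have hv : ∑ j : Fin m, ∑ k : Fin d, (v (j,k))^2 = ‖v‖^2 := by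
    rw [EuclideanSpace.norm_eq, Real.sq_sqrt (by positivity), Fintype.sum_prod_type]
    refine Finset.sum_congr rfl fun j _ => Finset.sum_congr rfl fun k _ => ?_
    rw [Real.norm_eq_abs, sq_abs]
  have h1 : ∀ j : Fin m, (lin x0 v j)^2 ≤ (∑ k : Fin d, (v (j,k))^2) * ∑ k : Fin d, (x0 k)^2 :=
    fun j => Finset.sum_mul_sq_le_sq_mul_sq _ _ _
  calc ∑ j : Fin m, (lin x0 v j)^2
      ≤ ∑ j : Fin m, (∑ k : Fin d, (v (j,k))^2) * ∑ k : Fin d, (x0 k)^2 :=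
        Finset.sum_le_sum fun j _ => h1 j
    _ = (∑ j : Fin m, ∑ k : Fin d, (v (j,k))^2) * ∑ k : Fin d, (x0 k)^2 :=
        (Finset.sum_mul ..).symm
    _ = ‖v‖^2 * ‖x0‖^2 := by rw [hv, hxx]
    _ ≤ ‖v‖^2 * R^2 := by
        refine mul_le_mul_of_nonneg_left ?_ (by positivity)
        exact pow_le_pow_left₀ (norm_nonneg _) hx0 2
    _ = R^2 * ‖v‖^2 := mul_comm _ _

lemma Z2_bound {L R : ℝ} (ha : ∀ j, |a j| = 1) (hy : ∀ i, |y i| = 1)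
    (hτ : ∀ u, |τ u| ≤ L) (i : Fin n) (hx0 : ‖x i‖ ≤ R) (α : ℝ) :
    |Z2 a τ x y w v i α| ≤ L * R^2 * ‖v‖^2 / Real.sqrt m := by
  have hL0 : 0 ≤ L := (abs_nonneg _).trans (hτ 0)
  have hsm : 0 ≤ (1 / Real.sqrt (m : ℕ) : ℝ) := by positivity
  unfold Z2
  rw [abs_mul, hy i, one_mul, abs_mul, abs_of_nonneg hsm]
  have hS : |∑ j : Fin m, a j * (τ (sfun (x i) w v j α) * lin (x i) v j * lin (x i) v j)|
      ≤ L * (R^2 * ‖v‖^2) := by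
    calc |∑ j : Fin m, a j * (τ (sfun (x i) w v j α) * lin (x i) v j * lin (x i) v j)|
        ≤ ∑ j : Fin m, |a j * (τ (sfun (x i) w v j α) * lin (x i) v j * lin (x i) v j)| :=
          Finset.abs_sum_le_sum_abs _ _
      _ ≤ ∑ j : Fin m, L * (lin (x i) v j)^2 := by
          refine Finset.sum_le_sum fun j _ => ?_
          rw [abs_mul, ha j, one_mul, abs_mul, abs_mul]
          calc |τ (sfun (x i) w v j α)| * |lin (x i) v j| * |lin (x i) v j|
              ≤ L * |lin (x i) v j| * |lin (x i) v j| := by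
                refine mul_le_mul_of_nonneg_right
                  (mul_le_mul_of_nonneg_right (hτ _) (abs_nonneg _)) (abs_nonneg _)
            _ = L * (lin (x i) v j)^2 := by rw [mul_assoc, ← sq_abs]; ring
      _ = L * ∑ j : Fin m, (lin (x i) v j)^2 := (Finset.mul_sum ..).symm
      _ ≤ L * (R^2 * ‖v‖^2) := by
          refine mul_le_mul_of_nonneg_left ?_ hL0
          simpa [mul_comm] using sum_lin_sq (x i) hx0 v
  calc (1 / Real.sqrt m) *
        |∑ j : Fin m, a j * (τ (sfun (x i) w v j α) * lin (x i) v j * lin (x i) v j)|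
      ≤ (1 / Real.sqrt m) * (L * (R^2 * ‖v‖^2)) := mul_le_mul_of_nonneg_left hS hsm
    _ = L * R^2 * ‖v‖^2 / Real.sqrt m := by ring

lemma second_deriv_nonneg {f : ℝ → ℝ} (hf : ContDiff ℝ 2 f) (hconv : ConvexOn ℝ Set.univ f)
    (hfd' : Differentiable ℝ (deriv f)) : ∀ u, 0 ≤ deriv (deriv f) u := by
  have hfd : Differentiable ℝ f := hf.differentiable two_ne_zero
  have hmono : Monotone (deriv f) :=
    monotoneOn_univ.mp (hconv.monotoneOn_deriv fun u _ => hfd u)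
  intro u
  have hd : HasDerivAt (deriv f) (deriv (deriv f) u) u := (hfd' u).hasDerivAt
  have htend := (hasDerivAt_iff_tendsto_slope.mp hd).mono_left
    (nhdsWithin_mono u (show Set.Ioi u ⊆ {u}ᶜ from
      fun z hz => Set.mem_compl_singleton_iff.mpr (ne_of_gt hz)))
  refine ge_of_tendsto htend ?_
  filter_upwards [self_mem_nhdsWithin] with z hz
  rw [slope_def_field]
  exact div_nonneg (sub_nonneg.mpr (hmono (le_of_lt hz))) (by linarith [Set.mem_Ioi.mp hz])

lemma deriv_f_contDiff {f : ℝ → ℝ} (hf : ContDiff ℝ 2 f) : ContDiff ℝ 1 (deriv f) := by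
  have h2 : ContDiff ℝ ((1 : WithTop ℕ∞) + 1) f := by
    rw [show ((1 : WithTop ℕ∞) + 1) = 2 by norm_num]; exact hf
  exact (contDiff_succ_iff_deriv.mp h2).2.2

lemma empLoss_contDiff (hσ : ContDiff ℝ 2 σ) (hf : ContDiff ℝ 2 f) :
    ContDiff ℝ 2 (empLoss a σ f x y) := by
  unfold empLoss Phi
  have hcoord : ∀ q : Fin m × Fin d,
      ContDiff ℝ 2 (fun u : EuclideanSpace ℝ (Fin m × Fin d) => u q) :=
    fun q => (EuclideanSpace.proj (𝕜 := ℝ) q).contDiff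
  have hinner : ∀ (i : Fin n) (j : Fin m), ContDiff ℝ 2
      (fun u : EuclideanSpace ℝ (Fin m × Fin d) => ∑ k : Fin d, u (j, k) * (x i) k) :=
    fun i j => ContDiff.sum fun k _ => (hcoord (j, k)).mul contDiff_const
  have hphi : ∀ i : Fin n, ContDiff ℝ 2
      (fun u : EuclideanSpace ℝ (Fin m × Fin d) =>
        (1 / Real.sqrt m) * ∑ j : Fin m, a j * σ (∑ k : Fin d, u (j, k) * (x i) k)) :=
    fun i => contDiff_const.mul (ContDiff.sum fun j _ =>
      contDiff_const.mul (hσ.comp (hinner i j)))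
  exact contDiff_const.mul (ContDiff.sum fun i _ =>
    hf.comp (contDiff_const.mul (hphi i)))

lemma GG2_ge {L R : ℝ} (ha : ∀ j, |a j| = 1) (hy : ∀ i, |y i| = 1)
    (hσ'' : ∀ u, |deriv (deriv σ) u| ≤ L) (hx : ∀ i, ‖x i‖ ≤ R)
    (hf2 : ∀ u, 0 ≤ deriv (deriv f) u) (hfself : ∀ u, |deriv f u| ≤ f u)
    (hfnn : ∀ u, 0 ≤ f u) (α : ℝ) :
    -(L * R^2 * ‖v‖^2 / Real.sqrt m * GG a σ f x y w v α) ≤ GG2 a σ f x y w v α := by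
  have hL0 : 0 ≤ L := (abs_nonneg _).trans (hσ'' 0)
  have hB0 : 0 ≤ L * R^2 * ‖v‖^2 / Real.sqrt m := by positivity
  have hterm : ∀ i : Fin n,
      -(L * R^2 * ‖v‖^2 / Real.sqrt m * f (Z a σ x y w v i α)) ≤
      deriv (deriv f) (Z a σ x y w v i α) * Z1 a (deriv σ) x y w v i α
        * Z1 a (deriv σ) x y w v i α
      + deriv f (Z a σ x y w v i α) * Z2 a (deriv (deriv σ)) x y w v i α := by
    intro i
    have t1 : 0 ≤ deriv (deriv f) (Z a σ x y w v i α) * Z1 a (deriv σ) x y w v i α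
        * Z1 a (deriv σ) x y w v i α := by
      rw [mul_assoc]; exact mul_nonneg (hf2 _) (mul_self_nonneg _)
    have t2 : |deriv f (Z a σ x y w v i α) * Z2 a (deriv (deriv σ)) x y w v i α|
        ≤ f (Z a σ x y w v i α) * (L * R^2 * ‖v‖^2 / Real.sqrt m) := by
      rw [abs_mul]
      exact mul_le_mul (hfself _) (Z2_bound ha hy hσ'' i (hx i) α) (abs_nonneg _) (hfnn _)
    have t3 := neg_abs_le (deriv f (Z a σ x y w v i α) * Z2 a (deriv (deriv σ)) x y w v i α)
    nlinarith [t1, t2, t3]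
  have hsum := Finset.sum_le_sum fun i (_ : i ∈ Finset.univ) => hterm i
  have hn0 : 0 ≤ (1 / (n:ℝ)) := by positivity
  have hmul := mul_le_mul_of_nonneg_left hsum hn0
  have hid : (1/(n:ℝ)) * ∑ i : Fin n,
      -(L * R^2 * ‖v‖^2 / Real.sqrt m * f (Z a σ x y w v i α))
      = -(L * R^2 * ‖v‖^2 / Real.sqrt m
          * ((1/(n:ℝ)) * ∑ i : Fin n, f (Z a σ x y w v i α))) := by
    rw [Finset.sum_neg_distrib, ← Finset.mul_sum]; ring
  rw [hid] at hmul
  unfold GG GG2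
  exact hmul

lemma key_ineq {L R : ℝ} (ha : ∀ j, |a j| = 1) (hy : ∀ i, |y i| = 1)
    (hσ : ContDiff ℝ 2 σ) (hσ'' : ∀ u, |deriv (deriv σ) u| ≤ L)
    (hf : ContDiff ℝ 2 f) (hfconv : ConvexOn ℝ Set.univ f)
    (hfnn : ∀ u, 0 ≤ f u) (hfself : ∀ u, |deriv f u| ≤ f u)
    (hx : ∀ i, ‖x i‖ ≤ R)
    (p : EuclideanSpace ℝ (Fin m × Fin d))
    (hc : L * R^2 * ‖p - w‖^2 / Real.sqrt m ≤ 1/2) :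
    -(2 * empLoss a σ f x y w) ≤ ⟪gradient (empLoss a σ f x y) p, p - w⟫ := by
  set v := p - w with hv
  have hL0 : 0 ≤ L := (abs_nonneg _).trans (hσ'' 0)
  have hσd : Differentiable ℝ σ := hσ.differentiable two_ne_zero
  have hσd' : Differentiable ℝ (deriv σ) := (deriv_f_contDiff hσ).differentiable one_ne_zero
  have hfd : Differentiable ℝ f := hf.differentiable two_ne_zero
  have hfd' : Differentiable ℝ (deriv f) := (deriv_f_contDiff hf).differentiable one_ne_zero
  have hf2 := second_deriv_nonneg hf hfconv hfd'
  have hB0 : 0 ≤ L * R^2 * ‖v‖^2 / Real.sqrt m := by positivity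
  have hsc := scalar_core (c := L * R^2 * ‖v‖^2 / Real.sqrt m) hB0 hc
    (hasDerivAt_GG (a := a) (x := x) (y := y) (w := w) (v := v) hfd hσd)
    (hasDerivAt_GG1 hfd hfd' hσd hσd')
    (GG_nonneg hfnn)
    (fun α => GG2_ge ha hy hσ'' hx hf2 hfself hfnn α)
  have h0 : GG a σ f x y w v 0 = empLoss a σ f x y w := by
    rw [GG_eq, zero_smul, add_zero]
  have h1 : GG a σ f x y w v 1 = empLoss a σ f x y p := by
    rw [GG_eq, one_smul, hv, add_sub_cancel]
  have hF := empLoss_contDiff (a := a) (x := x) (y := y) hσ hf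
  have hdiffp : DifferentiableAt ℝ (empLoss a σ f x y) p := (hF.differentiable two_ne_zero) p
  have hfder := hdiffp.hasGradientAt.hasFDerivAt
  have hline : HasDerivAt (fun α : ℝ => w + α • v) v 1 := by
    simpa using ((hasDerivAt_id (1:ℝ)).smul_const v).const_add w
  have he : w + (1:ℝ) • v = p := by rw [one_smul, hv, add_sub_cancel]
  rw [← he] at hfder
  have hcomp := HasFDerivAt.comp_hasDerivAt (1:ℝ) hfder hline
  rw [he] at hcomp
  have hGGfun : GG a σ f x y w v = fun α => empLoss a σ f x y (w + α • v) :=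
    funext fun α => GG_eq α
  have hG1at : HasDerivAt (GG a σ f x y w v) (GG1 a σ f x y w v 1) 1 :=
    hasDerivAt_GG hfd hσd 1
  rw [hGGfun] at hG1at
  have huniq : GG1 a σ f x y w v 1
      = (InnerProductSpace.toDual ℝ _ (gradient (empLoss a σ f x y) p)) v :=
    hG1at.unique hcomp
  rw [InnerProductSpace.toDual_apply_apply] at huniq
  rw [h0, h1, huniq] at hsc
  linarith

end IterAux

set_option maxHeartbeats 1000000 in
/-- iterates-norm bound for GD under the descent condition. -/
theorem iterates_norm_bound
    {m d n : ℕ} (ℓ L R η : ℝ)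
    (a : Fin m → ℝ) (ha : ∀ j, a j = 1 ∨ a j = -1)
    (σ : ℝ → ℝ) (hσ : ContDiff ℝ 2 σ)
    (hσ' : ∀ u, |deriv σ u| ≤ ℓ) (hσ'' : ∀ u, |deriv (deriv σ) u| ≤ L)
    (f : ℝ → ℝ) (hf : ContDiff ℝ 2 f) (hfconv : ConvexOn ℝ Set.univ f)
    (hfnonneg : ∀ u, 0 ≤ f u) (hfself : ∀ u, |deriv f u| ≤ f u)
    (x : Fin n → EuclideanSpace ℝ (Fin d)) (y : Fin n → ℝ)
    (hx : ∀ i, ‖x i‖ ≤ R) (hy : ∀ i, y i = 1 ∨ y i = -1)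
    (hη : 0 < η)
    (w₀ : EuclideanSpace ℝ (Fin m × Fin d))
    (W : ℕ → EuclideanSpace ℝ (Fin m × Fin d)) (hW0 : W 0 = w₀)
    (hWrec : ∀ t : ℕ, W (t + 1) = W t - η • gradient (empLoss a σ f x y) (W t))
    (hdescent : ∀ t : ℕ,
      empLoss a σ f x y (W (t + 1))
        ≤ empLoss a σ f x y (W t) - (η / 2) * ‖gradient (empLoss a σ f x y) (W t)‖ ^ 2)
    (w : EuclideanSpace ℝ (Fin m × Fin d)) (T : ℕ) (hT : 1 ≤ T)
    (hw : max (η * T * empLoss a σ f x y w) (η * empLoss a σ f x y w₀) ≤ ‖w - w₀‖ ^ 2)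
    (hm : 18 * L * R ^ 2 * ‖w - w₀‖ ^ 2 ≤ Real.sqrt m) :
    ∀ t ∈ Finset.Icc 1 T, ‖W t - w‖ ≤ 3 * ‖w - w₀‖ := by
  intro t ht
  rw [Finset.mem_Icc] at ht
  have hρ0 : (0:ℝ) ≤ ‖w - w₀‖ := norm_nonneg _
  rcases Nat.eq_zero_or_pos m with rfl | hm1
  · -- trivial: the weight space is a point
    have hz : ‖W t - w‖ = 0 := by
      rw [EuclideanSpace.norm_eq]
      simp
    rw [hz]
    positivity
  -- now m ≥ 1
  have hsm : 0 < Real.sqrt m := Real.sqrt_pos.mpr (by exact_mod_cast hm1)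
  have hL0 : 0 ≤ L := (abs_nonneg _).trans (hσ'' 0)
  have ha' : ∀ j, |a j| = 1 := by
    intro j; rcases ha j with h | h <;> simp [h]
  have hy' : ∀ i, |y i| = 1 := by
    intro i; rcases hy i with h | h <;> simp [h]
  set F := empLoss a σ f x y with hF
  have hFnn : ∀ u, 0 ≤ F u := by
    intro u
    rw [hF]
    unfold empLoss
    exact mul_nonneg (by positivity) (Finset.sum_nonneg fun i _ => hfnonneg _)
  have hw1 : η * T * F w ≤ ‖w - w₀‖^2 := le_trans (le_max_left _ _) hw
  have hw2 : η * F w₀ ≤ ‖w - w₀‖^2 := le_trans (le_max_right _ _) hw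
  -- the one-step inequality
  have hstep : ∀ s : ℕ, ‖W s - w‖^2 ≤ 9 * ‖w - w₀‖^2 →
      ‖W (s+1) - w‖^2 ≤ ‖W s - w‖^2 + 4*η*F w + 2*η*(F (W s) - F (W (s+1))) := by
    intro s hs
    have hcs : L * R^2 * ‖W s - w‖^2 / Real.sqrt m ≤ 1/2 := by
      rw [div_le_iff₀ hsm]
      have h1 : L * R^2 * ‖W s - w‖^2 ≤ L * R^2 * (9 * ‖w - w₀‖^2) :=
        mul_le_mul_of_nonneg_left hs (by positivity)
      nlinarith [hm]
    have hkey := key_ineq (w := w) ha' hy' hσ hσ'' hf hfconv hfnonneg hfself hx (W s) hcs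
    have hexp : ‖W (s+1) - w‖^2 = ‖W s - w‖^2
        - 2*η*⟪gradient F (W s), W s - w⟫ + η^2*‖gradient F (W s)‖^2 := by
      rw [hWrec s]
      have e1 : W s - η • gradient F (W s) - w = (W s - w) - η • gradient F (W s) := by
        abel
      rw [e1, norm_sub_sq_real, real_inner_smul_right, real_inner_comm,
        norm_smul, Real.norm_eq_abs, abs_of_pos hη, mul_pow]
      ring
    have hdes := hdescent s
    rw [hexp]
    nlinarith [hkey, hdes, hη]
  -- telescoped bound by induction
  have hB : ∀ s : ℕ, s ≤ T →
      ‖W s - w‖^2 ≤ ‖w - w₀‖^2 + 4*s*η*F w + 2*η*(F w₀ - F (W s)) := by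
    intro s
    induction s with
    | zero =>
      intro _
      rw [hW0, norm_sub_rev]
      simp
    | succ s ih =>
      intro hsT
      have hsT' : s ≤ T := Nat.le_of_succ_le hsT
      have ihs := ih hsT'
      have hcast : (s:ℝ) ≤ (T:ℝ) := Nat.cast_le.mpr hsT'
      have hbound : ‖W s - w‖^2 ≤ 9 * ‖w - w₀‖^2 := by
        have h4 : (s:ℝ)*η*F w ≤ ‖w - w₀‖^2 := by
          nlinarith [mul_nonneg (mul_nonneg (sub_nonneg.mpr hcast) hη.le) (hFnn w)]
        nlinarith [hFnn (W s), hFnn w₀, hη]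
      have := hstep s hbound
      push_cast
      push_cast at ihs
      linarith
  have hBt := hB t ht.2
  have hcast : (t:ℝ) ≤ (T:ℝ) := Nat.cast_le.mpr ht.2
  have h4 : (t:ℝ)*η*F w ≤ ‖w - w₀‖^2 := by
    nlinarith [mul_nonneg (mul_nonneg (sub_nonneg.mpr hcast) hη.le) (hFnn w)]
  have h7 : ‖W t - w‖^2 ≤ 9 * ‖w - w₀‖^2 := by
    nlinarith [hFnn (W t), hFnn w₀, hη]
  nlinarith [norm_nonneg (W t - w), hρ0]
end

section
/- (Initialization bound.) Suppose the activation σ is ℓ-Lipschitz, the width m is even, exactly half of the second-layer signs a_j equal +1 and half equal −1, and the data points x_1,…,x_{ñ} ∈ ℝ^d satisfy ‖x_i‖ ≤ R. Let the initialization w_0 ∈ ℝ^{md} have i.i.d. standard Gaussian entries. Then for any δ ∈ (0,1), with probability at least 1 − δ over w_0, |Φ(w_0, x_i)| ≤ ℓR·√(2·log(2ñ/δ)) for all i ∈ {1,…,ñ}. -/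
open scoped BigOperators
open MeasureTheory

/-- Standard Gaussian measure on a finite-dimensional Euclidean space
(i.i.d. standard Gaussian coordinates). -/
noncomputable def stdGaussian (ι : Type*) [Fintype ι] :
    Measure (EuclideanSpace ℝ ι) :=
  Measure.map (WithLp.equiv 2 (ι → ℝ)).symm
    (Measure.pi fun _ : ι => ProbabilityTheory.gaussianReal 0 1)

open Real ProbabilityTheory
open scoped NNReal ENNReal

section Aux

lemma integral_exp_gauss (b : ℝ) :
    ∫ y, Real.exp (b * y) ∂(gaussianReal 0 1) = Real.exp (b^2/2) := by
  have hpdf : gaussianReal 0 1 = (volume : Measure ℝ).withDensity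
      (fun y => ((gaussianPDFReal 0 1 y).toNNReal : ℝ≥0∞)) := by
    rw [gaussianReal_of_var_ne_zero 0 one_ne_zero]; rfl
  rw [hpdf, integral_withDensity_eq_integral_smul
    ((measurable_gaussianPDFReal 0 1).real_toNNReal)]
  have key : ∀ y : ℝ, (gaussianPDFReal 0 1 y).toNNReal • Real.exp (b * y)
      = Real.exp (b^2/2) • ((Real.sqrt (2 * π))⁻¹ * Real.exp (-(1/2) * (y - b)^2)) := by
    intro y
    rw [NNReal.smul_def, smul_eq_mul, smul_eq_mul,
      Real.coe_toNNReal _ (gaussianPDFReal_nonneg 0 1 y), gaussianPDFReal]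
    push_cast
    rw [mul_one, sub_zero, mul_assoc, ← Real.exp_add, ← mul_assoc,
      mul_comm (Real.exp (b^2/2)), mul_assoc, ← Real.exp_add]
    ring_nf
  simp_rw [key, integral_smul]
  rw [integral_const_mul]
  have : ∫ y : ℝ, Real.exp (-(1/2) * (y - b)^2) = ∫ y : ℝ, Real.exp (-(1/2) * y^2) :=
    integral_sub_right_eq_self (μ := volume) (fun y => Real.exp (-(1/2) * y^2)) b
  rw [this, integral_gaussian, smul_eq_mul, show π / (1/2) = 2 * π by ring,
    inv_mul_cancel₀ (by positivity : Real.sqrt (2*π) ≠ 0), mul_one]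

lemma integrable_exp_gauss (b : ℝ) :
    Integrable (fun y => Real.exp (b * y)) (gaussianReal 0 1) := by
  have hpdf : gaussianReal 0 1 = (volume : Measure ℝ).withDensity
      (fun y => ((gaussianPDFReal 0 1 y).toNNReal : ℝ≥0∞)) := by
    rw [gaussianReal_of_var_ne_zero 0 one_ne_zero]; rfl
  rw [hpdf, integrable_withDensity_iff_integrable_smul
    ((measurable_gaussianPDFReal 0 1).real_toNNReal)]
  have key : ∀ y : ℝ, (gaussianPDFReal 0 1 y).toNNReal • Real.exp (b * y)
      = ((Real.sqrt (2 * π))⁻¹ * Real.exp (b^2/2)) * Real.exp (-(1/2) * (y - b)^2) := by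
    intro y
    rw [NNReal.smul_def, smul_eq_mul,
      Real.coe_toNNReal _ (gaussianPDFReal_nonneg 0 1 y), gaussianPDFReal]
    push_cast
    rw [mul_one, sub_zero, mul_assoc, ← Real.exp_add, mul_assoc, ← Real.exp_add]
    ring_nf
  simp_rw [key]
  exact ((integrable_exp_neg_mul_sq (by norm_num : (0:ℝ) < 1/2)).comp_sub_right b).const_mul _

lemma lintegral_exp_gauss (b : ℝ) :
    ∫⁻ y, ENNReal.ofReal (Real.exp (b * y)) ∂(gaussianReal 0 1)
      = ENNReal.ofReal (Real.exp (b^2/2)) := by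
  rw [← integral_exp_gauss b, ← ofReal_integral_eq_lintegral_ofReal (integrable_exp_gauss b)]
  exact Filter.Eventually.of_forall fun y => (Real.exp_pos _).le


variable {α : Type*} [MeasurableSpace α] (μ : Measure α) [IsProbabilityMeasure μ]

lemma lintegral_pi_prod : ∀ (n : ℕ) (g : Fin n → α → ℝ≥0∞), (∀ j, Measurable (g j)) →
    ∫⁻ w : Fin n → α, ∏ j, g j (w j) ∂(Measure.pi fun _ => μ) = ∏ j, ∫⁻ y, g j y ∂μ := by
  intro n
  induction n with
  | zero => intro g _; simp
  | succ n ih =>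
    intro g hg
    rw [((measurePreserving_piFinSuccAbove (fun _ : Fin (n+1) => μ) 0).symm _).lintegral_map_equiv]
    simp_rw [MeasurableEquiv.piFinSuccAbove_symm_apply, Fin.insertNthEquiv,
      Fin.prod_univ_succ, Fin.insertNth_zero, Equiv.coe_fn_mk, Fin.cons_zero, Fin.cons_succ,
      cast_eq]
    rw [lintegral_prod_mul (f := fun y => g 0 y) (g := fun r : Fin n → α => ∏ j : Fin n, g j.succ (r j))
      (hg 0).aemeasurable
      (Finset.measurable_prod _ fun j _ => (hg j.succ).comp (measurable_pi_apply j)).aemeasurable]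
    rw [ih (fun j => g j.succ) (fun j => hg j.succ)]

/-- The equiv `κ ⊕ (Fin n × κ) ≃ Fin (n+1) × κ`. -/
def blockEquiv (n : ℕ) (κ : Type*) : (κ ⊕ (Fin n × κ)) ≃ (Fin (n+1) × κ) where
  toFun := fun z => Sum.elim (fun i => (0, i)) (fun p => (p.1.succ, p.2)) z
  invFun := fun p => Fin.cases (Sum.inl p.2) (fun j => Sum.inr (j, p.2)) p.1
  left_inv := by rintro (i | ⟨j, i⟩) <;> simp
  right_inv := by
    rintro ⟨j, i⟩
    induction j using Fin.cases <;> simp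

lemma lintegral_pi_block_prod {κ : Type*} [Fintype κ] :
    ∀ (n : ℕ) (g : Fin n → (κ → α) → ℝ≥0∞), (∀ j, Measurable (g j)) →
    ∫⁻ w : Fin n × κ → α, ∏ j, g j (fun i => w (j, i)) ∂(Measure.pi fun _ => μ)
      = ∏ j, ∫⁻ u : κ → α, g j u ∂(Measure.pi fun _ => μ) := by
  intro n
  induction n with
  | zero => intro g _; simp
  | succ n ih =>
    intro g hg
    have mp1 := measurePreserving_piCongrLeft (fun _ : Fin (n+1) × κ => μ) (blockEquiv n κ)
    have mp2 := measurePreserving_sumPiEquivProdPi_symm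
      (fun _ : κ ⊕ (Fin n × κ) => μ)
    rw [mp1.lintegral_map_equiv, mp2.lintegral_map_equiv]
    have key : ∀ (z : (κ → α) × (Fin n × κ → α)),
        (∏ j : Fin (n+1), g j (fun i =>
          (MeasurableEquiv.piCongrLeft (fun _ => α) (blockEquiv n κ))
            ((MeasurableEquiv.sumPiEquivProdPi _).symm z) (j, i)))
        = g 0 z.1 * ∏ j : Fin n, g j.succ (fun i => z.2 (j, i)) := by
      intro z
      rw [Fin.prod_univ_succ]
      have h1 : ∀ i : κ,
          (MeasurableEquiv.piCongrLeft (fun _ => α) (blockEquiv n κ))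
            ((MeasurableEquiv.sumPiEquivProdPi _).symm z) ((0 : Fin (n+1)), i) = z.1 i := by
        intro i
        have h : ((0 : Fin (n+1)), i) = blockEquiv n κ (Sum.inl i) := rfl
        rw [h, MeasurableEquiv.piCongrLeft_apply_apply]
        rfl
      have h2 : ∀ (j : Fin n) (i : κ),
          (MeasurableEquiv.piCongrLeft (fun _ => α) (blockEquiv n κ))
            ((MeasurableEquiv.sumPiEquivProdPi _).symm z) (j.succ, i) = z.2 (j, i) := by
        intro j i
        have h : (Fin.succ j, i) = blockEquiv n κ (Sum.inr (j, i)) := rfl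
        rw [h, MeasurableEquiv.piCongrLeft_apply_apply]
        rfl
      simp_rw [h1, h2]
    simp_rw [key]
    rw [lintegral_prod_mul (f := fun u => g 0 u)
      (g := fun r : Fin n × κ → α => ∏ j : Fin n, g j.succ (fun i => r (j, i)))
      (hg 0).aemeasurable
      (Finset.measurable_prod _ fun j _ => (hg j.succ).comp
        (measurable_pi_lambda _ fun i => measurable_pi_apply _)).aemeasurable]
    rw [ih (fun j => g j.succ) (fun j => hg j.succ), Fin.prod_univ_succ]


noncomputable def gpi (d : ℕ) : Measure (Fin d → ℝ) := Measure.pi fun _ => gaussianReal 0 1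

instance (d : ℕ) : IsProbabilityMeasure (gpi d) := by unfold gpi; infer_instance

lemma measurable_S {d : ℕ} (x : Fin d → ℝ) :
    Measurable (fun u : Fin d → ℝ => ∑ i, u i * x i) :=
  Finset.measurable_sum _ fun i _ => (measurable_pi_apply i).mul_const _

lemma two_cosh_eq (t : ℝ) : Real.exp t + Real.exp (-t) = 2 * Real.cosh t := by
  rw [Real.cosh_eq]; ring

lemma lintegral_exp_linear {d : ℕ} (x : Fin d → ℝ) (b : ℝ) :
    ∫⁻ u : Fin d → ℝ, ENNReal.ofReal (Real.exp (b * ∑ i, u i * x i)) ∂(gpi d)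
      = ENNReal.ofReal (Real.exp (b^2 * (∑ i, (x i)^2) / 2)) := by
  have h1 : ∀ u : Fin d → ℝ, ENNReal.ofReal (Real.exp (b * ∑ i, u i * x i))
      = ∏ i, ENNReal.ofReal (Real.exp ((b * x i) * u i)) := by
    intro u
    rw [show b * ∑ i, u i * x i = ∑ i, (b * x i) * u i by
        rw [Finset.mul_sum]; exact Finset.sum_congr rfl fun i _ => by ring,
      Real.exp_sum, ENNReal.ofReal_prod_of_nonneg (fun i _ => (Real.exp_pos _).le)]
  simp_rw [h1]
  unfold gpi
  rw [lintegral_pi_prod (gaussianReal 0 1) d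
    (fun i y => ENNReal.ofReal (Real.exp ((b * x i) * y)))
    (fun i => (Real.measurable_exp.comp (measurable_id.const_mul _)).ennreal_ofReal)]
  simp_rw [lintegral_exp_gauss]
  rw [← ENNReal.ofReal_prod_of_nonneg (fun i _ => (Real.exp_pos _).le), ← Real.exp_sum]
  exact congrArg ENNReal.ofReal (congrArg Real.exp (by
    rw [Finset.mul_sum, Finset.sum_div]
    exact Finset.sum_congr rfl fun i _ => by ring))

variable {ℓ : ℝ} {σ : ℝ → ℝ}

lemma pair_bound {d : ℕ} (x : Fin d → ℝ)
    (hσlip : ∀ u v : ℝ, |σ u - σ v| ≤ ℓ * |u - v|) (hl : 0 ≤ ℓ) (hσm : Measurable σ) (c : ℝ) :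
    (∫⁻ u, ENNReal.ofReal (Real.exp (c * σ (∑ i, u i * x i))) ∂(gpi d)) *
      (∫⁻ u, ENNReal.ofReal (Real.exp (-c * σ (∑ i, u i * x i))) ∂(gpi d))
    ≤ ENNReal.ofReal (Real.exp (c^2 * ℓ^2 * (∑ i, (x i)^2))) := by
  set ν := gpi d
  set S : (Fin d → ℝ) → ℝ := fun u => ∑ i, u i * x i with hS
  have hSm : Measurable S := measurable_S x
  have hJ : ∀ c₁ c₂ : ℝ,
      (∫⁻ u, ENNReal.ofReal (Real.exp (c₁ * σ (S u))) ∂ν) *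
        (∫⁻ u, ENNReal.ofReal (Real.exp (c₂ * σ (S u))) ∂ν)
      = ∫⁻ z : (Fin d → ℝ) × (Fin d → ℝ),
          ENNReal.ofReal (Real.exp (c₁ * σ (S z.1) + c₂ * σ (S z.2))) ∂(ν.prod ν) := by
    intro c₁ c₂
    rw [← lintegral_prod_mul (f := fun u => ENNReal.ofReal (Real.exp (c₁ * σ (S u))))
      (g := fun u => ENNReal.ofReal (Real.exp (c₂ * σ (S u))))
      (Real.measurable_exp.comp ((hσm.comp hSm).const_mul c₁)).ennreal_ofReal.aemeasurable
      (Real.measurable_exp.comp ((hσm.comp hSm).const_mul c₂)).ennreal_ofReal.aemeasurable]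
    congr 1; funext z
    rw [← ENNReal.ofReal_mul (Real.exp_pos _).le, ← Real.exp_add]
  have glin : ∀ c₁ c₂ : ℝ, ∫⁻ z : (Fin d → ℝ) × (Fin d → ℝ),
      ENNReal.ofReal (Real.exp (c₁ * S z.1 + c₂ * S z.2)) ∂(ν.prod ν)
      = ENNReal.ofReal (Real.exp (c₁^2 * (∑ i, (x i)^2) / 2))
        * ENNReal.ofReal (Real.exp (c₂^2 * (∑ i, (x i)^2) / 2)) := by
    intro c₁ c₂
    rw [← lintegral_exp_linear x c₁, ← lintegral_exp_linear x c₂]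
    rw [← lintegral_prod_mul (f := fun u => ENNReal.ofReal (Real.exp (c₁ * S u)))
      (g := fun u => ENNReal.ofReal (Real.exp (c₂ * S u)))
      (Real.measurable_exp.comp (hSm.const_mul c₁)).ennreal_ofReal.aemeasurable
      (Real.measurable_exp.comp (hSm.const_mul c₂)).ennreal_ofReal.aemeasurable]
    congr 1; funext z
    rw [← ENNReal.ofReal_mul (Real.exp_pos _).le, ← Real.exp_add]
  have key : ∀ z : (Fin d → ℝ) × (Fin d → ℝ),
      ENNReal.ofReal (Real.exp (c * σ (S z.1) + (-c) * σ (S z.2)))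
        + ENNReal.ofReal (Real.exp ((-c) * σ (S z.1) + c * σ (S z.2)))
      ≤ ENNReal.ofReal (Real.exp ((c*ℓ) * S z.1 + (-(c*ℓ)) * S z.2))
        + ENNReal.ofReal (Real.exp ((-(c*ℓ)) * S z.1 + (c*ℓ) * S z.2)) := by
    intro z
    rw [← ENNReal.ofReal_add (Real.exp_pos _).le (Real.exp_pos _).le,
        ← ENNReal.ofReal_add (Real.exp_pos _).le (Real.exp_pos _).le]
    apply ENNReal.ofReal_le_ofReal
    have hD : Real.exp (c * σ (S z.1) + (-c) * σ (S z.2))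
        + Real.exp ((-c) * σ (S z.1) + c * σ (S z.2))
        = 2 * Real.cosh (c * (σ (S z.1) - σ (S z.2))) := by
      rw [show c * σ (S z.1) + (-c) * σ (S z.2) = c * (σ (S z.1) - σ (S z.2)) by ring,
        show (-c) * σ (S z.1) + c * σ (S z.2) = -(c * (σ (S z.1) - σ (S z.2))) by ring,
        two_cosh_eq]
    have hG : Real.exp ((c*ℓ) * S z.1 + (-(c*ℓ)) * S z.2)
        + Real.exp ((-(c*ℓ)) * S z.1 + (c*ℓ) * S z.2)
        = 2 * Real.cosh ((c*ℓ) * (S z.1 - S z.2)) := by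
      rw [show (c*ℓ) * S z.1 + (-(c*ℓ)) * S z.2 = (c*ℓ) * (S z.1 - S z.2) by ring,
        show (-(c*ℓ)) * S z.1 + (c*ℓ) * S z.2 = -((c*ℓ) * (S z.1 - S z.2)) by ring,
        two_cosh_eq]
    rw [hD, hG]
    have habs : |c * (σ (S z.1) - σ (S z.2))| ≤ |(c*ℓ) * (S z.1 - S z.2)| := by
      rw [abs_mul, abs_mul (c*ℓ), abs_mul]
      calc |c| * |σ (S z.1) - σ (S z.2)| ≤ |c| * (ℓ * |S z.1 - S z.2|) :=
            mul_le_mul_of_nonneg_left (hσlip _ _) (abs_nonneg c)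
        _ = |c| * |ℓ| * |S z.1 - S z.2| := by rw [abs_of_nonneg hl]; ring
    have hcosh := Real.cosh_le_cosh.mpr habs
    linarith
  have e1 : (∫⁻ u, ENNReal.ofReal (Real.exp (-c * σ (S u))) ∂ν)
      = ∫⁻ u, ENNReal.ofReal (Real.exp ((-c) * σ (S u))) ∂ν := rfl
  rw [e1, hJ c (-c)]
  have meas1 : Measurable (fun z : (Fin d → ℝ) × (Fin d → ℝ) =>
      ENNReal.ofReal (Real.exp (c * σ (S z.1) + (-c) * σ (S z.2)))) :=
    (Real.measurable_exp.comp (((hσm.comp (hSm.comp measurable_fst)).const_mul _).add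
      ((hσm.comp (hSm.comp measurable_snd)).const_mul _))).ennreal_ofReal
  have meas2 : Measurable (fun z : (Fin d → ℝ) × (Fin d → ℝ) =>
      ENNReal.ofReal (Real.exp ((c*ℓ) * S z.1 + (-(c*ℓ)) * S z.2))) :=
    (Real.measurable_exp.comp (((hSm.comp measurable_fst).const_mul _).add
      ((hSm.comp measurable_snd).const_mul _))).ennreal_ofReal
  have swap : ∫⁻ z : (Fin d → ℝ) × (Fin d → ℝ),
      ENNReal.ofReal (Real.exp (c * σ (S z.1) + (-c) * σ (S z.2))) ∂(ν.prod ν)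
      = ∫⁻ z : (Fin d → ℝ) × (Fin d → ℝ),
      ENNReal.ofReal (Real.exp ((-c) * σ (S z.1) + c * σ (S z.2))) ∂(ν.prod ν) := by
    rw [← hJ c (-c), ← hJ (-c) c, mul_comm]
  have hdouble : (2 : ℝ≥0∞) * ∫⁻ z : (Fin d → ℝ) × (Fin d → ℝ),
      ENNReal.ofReal (Real.exp (c * σ (S z.1) + (-c) * σ (S z.2))) ∂(ν.prod ν)
      ≤ 2 * ENNReal.ofReal (Real.exp (c^2 * ℓ^2 * (∑ i, (x i)^2))) := by
    rw [two_mul]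
    nth_rewrite 2 [swap]
    rw [← lintegral_add_left meas1]
    calc ∫⁻ z : (Fin d → ℝ) × (Fin d → ℝ),
        (ENNReal.ofReal (Real.exp (c * σ (S z.1) + (-c) * σ (S z.2)))
          + ENNReal.ofReal (Real.exp ((-c) * σ (S z.1) + c * σ (S z.2)))) ∂(ν.prod ν)
        ≤ ∫⁻ z : (Fin d → ℝ) × (Fin d → ℝ),
        (ENNReal.ofReal (Real.exp ((c*ℓ) * S z.1 + (-(c*ℓ)) * S z.2))
          + ENNReal.ofReal (Real.exp ((-(c*ℓ)) * S z.1 + (c*ℓ) * S z.2))) ∂(ν.prod ν) :=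
          lintegral_mono key
      _ = 2 * ENNReal.ofReal (Real.exp (c^2 * ℓ^2 * (∑ i, (x i)^2))) := by
        rw [lintegral_add_left meas2, glin, glin,
          ← ENNReal.ofReal_mul (Real.exp_pos _).le, ← Real.exp_add,
          ← ENNReal.ofReal_mul (Real.exp_pos _).le, ← Real.exp_add, two_mul]
        congr 3 <;> ring
  exact (ENNReal.mul_le_mul_iff_right (by norm_num) (by norm_num)).mp hdouble




variable {ℓ : ℝ} {σ : ℝ → ℝ}

lemma mgf_bound {m d : ℕ} (a : Fin m → ℝ) (ha : ∀ j, a j = 1 ∨ a j = -1)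
    (hhalf : (Finset.univ.filter fun j : Fin m => a j = 1).card = m / 2)
    (hm : Even m)
    (hσlip : ∀ u v : ℝ, |σ u - σ v| ≤ ℓ * |u - v|) (hl : 0 ≤ ℓ) (hσm : Measurable σ)
    (x : Fin d → ℝ) (s : ℝ) :
    ∫⁻ w : Fin m × Fin d → ℝ, ENNReal.ofReal (Real.exp (s * ((1 / Real.sqrt m) *
        ∑ j, a j * σ (∑ i, w (j, i) * x i)))) ∂(Measure.pi fun _ => gaussianReal 0 1)
      ≤ ENNReal.ofReal (Real.exp (s^2 * ℓ^2 * (∑ i, (x i)^2) / 2)) := by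
  have hV : 0 ≤ ∑ i, (x i)^2 := Finset.sum_nonneg fun i _ => sq_nonneg _
  rcases Nat.eq_zero_or_pos m with hm0 | hmpos
  · subst hm0
    simp only [Finset.univ_eq_empty, Finset.sum_empty, mul_zero, Real.exp_zero,
      ENNReal.ofReal_one]
    rw [lintegral_one]
    rw [measure_univ]
    exact ENNReal.one_le_ofReal.mpr (Real.one_le_exp (by positivity))
  · set c : ℝ := s * (1 / Real.sqrt m) with hc
    set S : (Fin d → ℝ) → ℝ := fun u => ∑ i, u i * x i with hSdef
    have hSm : Measurable S := measurable_S x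
    set I : ℝ → ℝ≥0∞ := fun t => ∫⁻ u : Fin d → ℝ,
      ENNReal.ofReal (Real.exp ((c * t) * σ (S u))) ∂(gpi d) with hI
    have h1 : ∀ w : Fin m × Fin d → ℝ,
        ENNReal.ofReal (Real.exp (s * ((1 / Real.sqrt m) * ∑ j, a j * σ (S (fun i => w (j, i))))))
        = ∏ j, ENNReal.ofReal (Real.exp ((c * a j) * σ (S (fun i => w (j, i))))) := by
      intro w
      rw [show s * ((1 / Real.sqrt m) * ∑ j, a j * σ (S (fun i => w (j, i))))
          = ∑ j, (c * a j) * σ (S (fun i => w (j, i))) by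
        rw [Finset.mul_sum, Finset.mul_sum]
        exact Finset.sum_congr rfl fun j _ => by rw [hc]; ring,
        Real.exp_sum, ENNReal.ofReal_prod_of_nonneg (fun j _ => (Real.exp_pos _).le)]
    refine (lintegral_congr fun w => h1 w).trans_le ?_
    rw [lintegral_pi_block_prod (gaussianReal 0 1) m
      (fun j u => ENNReal.ofReal (Real.exp ((c * a j) * σ (S u))))
      (fun j => (Real.measurable_exp.comp ((hσm.comp hSm).const_mul _)).ennreal_ofReal)]
    have hprod : (∏ j, ∫⁻ u : Fin d → ℝ,
        ENNReal.ofReal (Real.exp ((c * a j) * σ (S u))) ∂(Measure.pi fun _ => gaussianReal 0 1))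
        = (I 1 * I (-1)) ^ (m / 2) := by
      rw [← Finset.prod_filter_mul_prod_filter_not Finset.univ (fun j => a j = 1)]
      have e1 : ∀ j ∈ Finset.univ.filter (fun j : Fin m => a j = 1),
          (∫⁻ u : Fin d → ℝ, ENNReal.ofReal (Real.exp ((c * a j) * σ (S u)))
            ∂(Measure.pi fun _ => gaussianReal 0 1)) = I 1 := by
        intro j hj
        rw [Finset.mem_filter] at hj
        rw [hj.2, hI]
        rfl
      have e2 : ∀ j ∈ Finset.univ.filter (fun j : Fin m => ¬ a j = 1),
          (∫⁻ u : Fin d → ℝ, ENNReal.ofReal (Real.exp ((c * a j) * σ (S u)))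
            ∂(Measure.pi fun _ => gaussianReal 0 1)) = I (-1) := by
        intro j hj
        rw [Finset.mem_filter] at hj
        have : a j = -1 := (ha j).resolve_left hj.2
        rw [this, hI]
        rfl
      rw [Finset.prod_congr rfl e1, Finset.prod_congr rfl e2, Finset.prod_const,
        Finset.prod_const, hhalf]
      have hcard : (Finset.univ.filter fun j : Fin m => ¬ a j = 1).card = m / 2 := by
        have := Finset.card_filter_add_card_filter_not
          (s := (Finset.univ : Finset (Fin m))) (p := fun j => a j = 1)
        simp only [Finset.card_univ, Fintype.card_fin] at this
        have hme : m / 2 * 2 = m := Nat.div_two_mul_two_of_even hm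
        omega
      rw [hcard, mul_pow]
    rw [hprod]
    have hpair : I 1 * I (-1) ≤ ENNReal.ofReal (Real.exp (c^2 * ℓ^2 * (∑ i, (x i)^2))) := by
      have h1' : I 1 = ∫⁻ u, ENNReal.ofReal (Real.exp (c * σ (∑ i, u i * x i))) ∂(gpi d) := by
        rw [hI]; simp_rw [mul_one]; rfl
      have h2' : I (-1) = ∫⁻ u, ENNReal.ofReal (Real.exp (-c * σ (∑ i, u i * x i))) ∂(gpi d) := by
        rw [hI]; simp_rw [mul_neg_one]; rfl
      rw [h1', h2']
      exact pair_bound x hσlip hl hσm c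
    calc (I 1 * I (-1)) ^ (m / 2)
        ≤ (ENNReal.ofReal (Real.exp (c^2 * ℓ^2 * (∑ i, (x i)^2)))) ^ (m / 2) :=
          pow_le_pow_left' hpair _
      _ = ENNReal.ofReal (Real.exp (s^2 * ℓ^2 * (∑ i, (x i)^2) / 2)) := by
        rw [← ENNReal.ofReal_pow (Real.exp_pos _).le, ← Real.exp_nat_mul]
        congr 2
        have hsq : Real.sqrt m ^ 2 = (m : ℝ) := Real.sq_sqrt (Nat.cast_nonneg m)
        have hme : m / 2 * 2 = m := Nat.div_two_mul_two_of_even hm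
        have hm2 : (m : ℝ) = 2 * (m / 2 : ℕ) := by exact_mod_cast (by omega : m = 2 * (m/2))
        have hk : (0:ℝ) < (m / 2 : ℕ) := by
          have : 0 < m / 2 := by omega
          exact_mod_cast this
        have hc2 : c^2 = s^2 / m := by
          rw [hc, mul_pow, div_pow, one_pow, hsq]
          ring
        rw [hc2, hm2]
        field_simp


lemma chernoff {Ω : Type*} [MeasurableSpace Ω] (μ : Measure Ω) (Y : Ω → ℝ) (hY : Measurable Y)
    (K t : ℝ) (hK : 0 < K) (ht : 0 ≤ t)
    (hmgf : ∀ s : ℝ, ∫⁻ ω, ENNReal.ofReal (Real.exp (s * Y ω)) ∂μ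
      ≤ ENNReal.ofReal (Real.exp (s^2 * K / 2))) :
    μ {ω | t ≤ Y ω} ≤ ENNReal.ofReal (Real.exp (-(t^2) / (2*K))) := by
  set s : ℝ := t / K with hs
  have hs0 : 0 ≤ s := div_nonneg ht hK.le
  have hsub : {ω | t ≤ Y ω} ⊆
      {ω | ENNReal.ofReal (Real.exp (s * t)) ≤ ENNReal.ofReal (Real.exp (s * Y ω))} := by
    intro ω hω
    exact ENNReal.ofReal_le_ofReal (Real.exp_le_exp.mpr
      (mul_le_mul_of_nonneg_left hω hs0))
  have hmarkov := mul_meas_ge_le_lintegral₀ (μ := μ)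
    (f := fun ω => ENNReal.ofReal (Real.exp (s * Y ω)))
    ((Real.measurable_exp.comp (hY.const_mul s)).ennreal_ofReal).aemeasurable
    (ENNReal.ofReal (Real.exp (s * t)))
  have hεne : ENNReal.ofReal (Real.exp (s * t)) ≠ 0 :=
    (ENNReal.ofReal_pos.mpr (Real.exp_pos _)).ne'
  have hεtop : ENNReal.ofReal (Real.exp (s * t)) ≠ ⊤ := ENNReal.ofReal_ne_top
  have step : ENNReal.ofReal (Real.exp (s * t)) * μ {ω | t ≤ Y ω}
      ≤ ENNReal.ofReal (Real.exp (s^2 * K / 2)) :=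
    le_trans (mul_le_mul_right (measure_mono hsub) _) (le_trans hmarkov (hmgf s))
  have : μ {ω | t ≤ Y ω} ≤ ENNReal.ofReal (Real.exp (s^2 * K / 2))
      / ENNReal.ofReal (Real.exp (s * t)) := by
    rw [ENNReal.le_div_iff_mul_le (Or.inl hεne) (Or.inl hεtop), mul_comm]
    exact step
  refine this.trans ?_
  rw [← ENNReal.ofReal_div_of_pos (Real.exp_pos _), ← Real.exp_sub]
  apply ENNReal.ofReal_le_ofReal
  apply Real.exp_le_exp.mpr
  apply le_of_eq
  rw [hs]
  field_simp
  ring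

lemma chernoff_abs {Ω : Type*} [MeasurableSpace Ω] (μ : Measure Ω) (Y : Ω → ℝ)
    (hY : Measurable Y) (K t : ℝ) (hK : 0 < K) (ht : 0 ≤ t)
    (hmgf : ∀ s : ℝ, ∫⁻ ω, ENNReal.ofReal (Real.exp (s * Y ω)) ∂μ
      ≤ ENNReal.ofReal (Real.exp (s^2 * K / 2))) :
    μ {ω | t ≤ |Y ω|} ≤ 2 * ENNReal.ofReal (Real.exp (-(t^2) / (2*K))) := by
  have hmgf' : ∀ s : ℝ, ∫⁻ ω, ENNReal.ofReal (Real.exp (s * (-(Y ω)))) ∂μ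
      ≤ ENNReal.ofReal (Real.exp (s^2 * K / 2)) := by
    intro s
    have := hmgf (-s)
    simp_rw [neg_mul, ← mul_neg] at this
    rwa [neg_pow, Even.neg_one_pow (by norm_num), one_mul] at this
  have h1 := chernoff μ Y hY K t hK ht hmgf
  have h2 := chernoff μ (fun ω => -(Y ω)) hY.neg K t hK ht hmgf'
  have hsub : {ω | t ≤ |Y ω|} ⊆ {ω | t ≤ Y ω} ∪ {ω | t ≤ -(Y ω)} := by
    intro ω hω
    simp only [Set.mem_setOf_eq] at hω
    rcases le_abs.mp hω with h | h
    · exact Or.inl h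
    · exact Or.inr h
  calc μ {ω | t ≤ |Y ω|} ≤ μ ({ω | t ≤ Y ω} ∪ {ω | t ≤ -(Y ω)}) := measure_mono hsub
    _ ≤ μ {ω | t ≤ Y ω} + μ {ω | t ≤ -(Y ω)} := measure_union_le _ _
    _ ≤ _ := by rw [two_mul]; exact add_le_add h1 h2

end Aux



/-- the measurable equiv between pi space and Euclidean space -/
noncomputable def euclidEquiv (ι : Type*) [Fintype ι] : (ι → ℝ) ≃ᵐ EuclideanSpace ℝ ι where
  toEquiv := (WithLp.equiv 2 (ι → ℝ)).symm
  measurable_toFun := WithLp.measurable_toLp 2 (ι → ℝ)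
  measurable_invFun := WithLp.measurable_ofLp 2 (ι → ℝ)

/-- high-probability bound on the model output at Gaussian
initialization. -/
theorem initialization_bound
    {m d nt : ℕ} (ℓ R : ℝ)
    (a : Fin m → ℝ) (ha : ∀ j, a j = 1 ∨ a j = -1)
    -- half of the second-layer signs are +1 and half are −1
    (hhalf : (Finset.univ.filter fun j : Fin m => a j = 1).card = m / 2)
    (hm : Even m)
    (σ : ℝ → ℝ) (hσlip : ∀ u v : ℝ, |σ u - σ v| ≤ ℓ * |u - v|)
    (x : Fin nt → EuclideanSpace ℝ (Fin d)) (hx : ∀ i, ‖x i‖ ≤ R)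
    (δ : ℝ) (hδ : δ ∈ Set.Ioo (0 : ℝ) 1) :
    stdGaussian (Fin m × Fin d)
      {w₀ | ∀ i : Fin nt,
        |Phi a σ w₀ (x i)| ≤ ℓ * R * Real.sqrt (2 * Real.log (2 * nt / δ))}
      ≥ ENNReal.ofReal (1 - δ) := by
  obtain ⟨hδ0, hδ1⟩ := hδ
  have hl : 0 ≤ ℓ := le_trans (abs_nonneg (σ 0 - σ 1)) (by simpa using hσlip 0 1)
  have hσm : Measurable σ :=
    (LipschitzWith.of_dist_le_mul (K := ⟨ℓ, hl⟩)
      (fun u v => by rw [Real.dist_eq, Real.dist_eq]; exact hσlip u v)).continuous.measurable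
  set T : ℝ := ℓ * R * Real.sqrt (2 * Real.log (2 * nt / δ)) with hT
  set P : Measure (Fin m × Fin d → ℝ) := Measure.pi fun _ => gaussianReal 0 1 with hP
  set Y : Fin nt → (Fin m × Fin d → ℝ) → ℝ := fun i w =>
    (1 / Real.sqrt m) * ∑ j, a j * σ (∑ i', w (j, i') * x i i') with hY
  have hYmeas : ∀ i, Measurable (Y i) := by
    intro i
    apply Measurable.const_mul
    exact Finset.measurable_sum _ fun j _ => ((hσm.comp
      (Finset.measurable_sum _ fun i' _ => (measurable_pi_apply (j, i')).mul_const _)).const_mul _)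
  -- rewrite the measure of the set as a pi-measure of a set of plain functions
  have hmap : stdGaussian (Fin m × Fin d)
      {w₀ | ∀ i : Fin nt, |Phi a σ w₀ (x i)| ≤ T}
      = P {w | ∀ i : Fin nt, |Y i w| ≤ T} := by
    have : stdGaussian (Fin m × Fin d) {w₀ | ∀ i : Fin nt, |Phi a σ w₀ (x i)| ≤ T}
        = Measure.map (euclidEquiv (Fin m × Fin d)) P
          {w₀ | ∀ i : Fin nt, |Phi a σ w₀ (x i)| ≤ T} := rfl
    rw [this, MeasurableEquiv.map_apply]
    rfl
  rw [ge_iff_le, hmap]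
  -- the set is measurable
  have hSmeas : MeasurableSet {w : Fin m × Fin d → ℝ | ∀ i : Fin nt, |Y i w| ≤ T} := by
    have : {w : Fin m × Fin d → ℝ | ∀ i : Fin nt, |Y i w| ≤ T}
        = ⋂ i, {w | |Y i w| ≤ T} := by ext w; simp [Set.mem_iInter]
    rw [this]
    exact MeasurableSet.iInter fun i => measurableSet_le (hYmeas i).abs measurable_const
  have hPprob : IsProbabilityMeasure P := by rw [hP]; infer_instance
  -- bound the measure of the complement
  have hcompl : P {w | ∀ i : Fin nt, |Y i w| ≤ T}ᶜ ≤ ENNReal.ofReal δ := by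
    rcases Nat.eq_zero_or_pos nt with h0 | hntpos
    · subst h0
      have : {w : Fin m × Fin d → ℝ | ∀ i : Fin 0, |Y i w| ≤ T}ᶜ = ∅ := by
        simp [Set.eq_empty_iff_forall_notMem]
      rw [this]
      simp
    · have hR0 : 0 ≤ R := le_trans (norm_nonneg _) (hx ⟨0, hntpos⟩)
      have hT0 : 0 ≤ T := by positivity
      rcases eq_or_lt_of_le (mul_nonneg hl hR0) with hlR | hlR
      · -- degenerate case : ℓ * R = 0, the network output is exactly 0
        have hzero : ∀ i w, Y i w = 0 := by
          intro i w
          have hsumzero : ∑ j, a j = 0 := by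
            rw [← Finset.sum_filter_add_sum_filter_not Finset.univ (fun j => a j = 1)]
            rw [Finset.sum_congr rfl (fun j hj => (Finset.mem_filter.mp hj).2),
              Finset.sum_congr rfl (fun j hj =>
                (ha j).resolve_left (Finset.mem_filter.mp hj).2),
              Finset.sum_const, Finset.sum_const, hhalf]
            have hcard : (Finset.univ.filter fun j : Fin m => ¬ a j = 1).card = m / 2 := by
              have := Finset.card_filter_add_card_filter_not
                (s := (Finset.univ : Finset (Fin m))) (p := fun j => a j = 1)
              simp only [Finset.card_univ, Fintype.card_fin] at this
              have hme : m / 2 * 2 = m := Nat.div_two_mul_two_of_even hm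
              omega
            rw [hcard]
            simp
          have hσconst : ∀ j, σ (∑ i', w (j, i') * x i i') = σ 0 := by
            intro j
            rcases mul_eq_zero.mp hlR.symm with hℓ0 | hR0'
            · have := hσlip (∑ i', w (j, i') * x i i') 0
              rw [hℓ0, zero_mul] at this
              have h0 := abs_nonpos_iff.mp this
              linarith
            · have hxi : x i = 0 := by
                have := hx i
                rw [hR0'] at this
                exact norm_le_zero_iff.mp this
              have : ∑ i', w (j, i') * x i i' = 0 := by
                apply Finset.sum_eq_zero
                intro i' _
                rw [hxi]
                simp
              rw [this]
          rw [hY]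
          simp only
          rw [Finset.sum_congr rfl (fun j _ => by rw [hσconst j]), ← Finset.sum_mul, hsumzero]
          ring
        have : {w : Fin m × Fin d → ℝ | ∀ i : Fin nt, |Y i w| ≤ T}ᶜ = ∅ := by
          rw [Set.eq_empty_iff_forall_notMem]
          intro w hw
          exact hw fun i => by rw [hzero i w]; simpa using hT0
        rw [this]; simp
      · -- main case : ℓ * R > 0
        have hℓpos : 0 < ℓ := hl.lt_of_ne (by rintro h; rw [← h] at hlR; simp at hlR)
        have hRpos : 0 < R := hR0.lt_of_ne (by rintro h; rw [← h] at hlR; simp at hlR)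
        set K : ℝ := ℓ^2 * R^2 with hKdef
        have hKpos : 0 < K := by positivity
        have hnt1 : (1:ℝ) ≤ (nt : ℝ) := by exact_mod_cast hntpos
        have hypos : (0:ℝ) < 2 * nt / δ := by positivity
        have hy1 : (1:ℝ) < 2 * nt / δ := by
          rw [lt_div_iff₀ hδ0]; nlinarith
        have hLpos : 0 < Real.log (2 * nt / δ) := Real.log_pos hy1
        have hti : ∀ i : Fin nt, P {w | T ≤ |Y i w|} ≤ ENNReal.ofReal (δ / nt) := by
          intro i
          have hVnn : 0 ≤ ∑ i', (x i i')^2 := Finset.sum_nonneg fun _ _ => sq_nonneg _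
          have hVle : (∑ i', (x i i')^2) ≤ R^2 := by
            have hnorm := hx i
            rw [EuclideanSpace.norm_eq] at hnorm
            have h1 : ∑ i', ‖x i i'‖^2 ≤ R^2 := by
              calc ∑ i', ‖x i i'‖^2
                  = (Real.sqrt (∑ i', ‖x i i'‖^2))^2 :=
                    (Real.sq_sqrt (Finset.sum_nonneg fun _ _ => sq_nonneg _)).symm
                _ ≤ R^2 := pow_le_pow_left₀ (Real.sqrt_nonneg _) hnorm 2
            simpa [Real.norm_eq_abs, sq_abs] using h1
          have hmgfK : ∀ s : ℝ, ∫⁻ w, ENNReal.ofReal (Real.exp (s * Y i w)) ∂P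
              ≤ ENNReal.ofReal (Real.exp (s^2 * K / 2)) := by
            intro s
            refine (mgf_bound a ha hhalf hm hσlip hl hσm (fun i' => x i i') s).trans ?_
            apply ENNReal.ofReal_le_ofReal
            apply Real.exp_le_exp.mpr
            have h2 : s^2 * ℓ^2 * (∑ i', (x i i')^2) ≤ s^2 * ℓ^2 * R^2 :=
              mul_le_mul_of_nonneg_left hVle (by positivity)
            rw [hKdef]
            nlinarith
          have htail := chernoff_abs P (Y i) (hYmeas i) K T hKpos hT0 hmgfK
          refine htail.trans ?_
          have hT2 : T^2 = K * (2 * Real.log (2 * nt / δ)) := by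
            rw [hT, hKdef, mul_pow, Real.sq_sqrt (by positivity)]
            ring
          have hexp : -(T^2) / (2*K) = -Real.log (2 * nt / δ) := by
            rw [hT2]
            field_simp
          rw [hexp, Real.exp_neg, Real.exp_log hypos]
          rw [show (2:ℝ≥0∞) = ENNReal.ofReal (2:ℝ) by simp,
            ← ENNReal.ofReal_mul (by norm_num)]
          apply ENNReal.ofReal_le_ofReal
          apply le_of_eq
          rw [inv_div]
          field_simp
        have hsub : {w : Fin m × Fin d → ℝ | ∀ i : Fin nt, |Y i w| ≤ T}ᶜ
            ⊆ ⋃ i, {w | T ≤ |Y i w|} := by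
          intro w hw
          simp only [Set.mem_compl_iff, Set.mem_setOf_eq, not_forall, not_le] at hw
          obtain ⟨i, hi⟩ := hw
          exact Set.mem_iUnion.mpr ⟨i, hi.le⟩
        calc P {w | ∀ i : Fin nt, |Y i w| ≤ T}ᶜ
            ≤ P (⋃ i, {w | T ≤ |Y i w|}) := measure_mono hsub
          _ ≤ ∑ i, P {w | T ≤ |Y i w|} := measure_iUnion_fintype_le _ _
          _ ≤ ∑ _i : Fin nt, ENNReal.ofReal (δ / nt) := Finset.sum_le_sum fun i _ => hti i
          _ = nt * ENNReal.ofReal (δ / nt) := by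
            rw [Finset.sum_const, Finset.card_univ, Fintype.card_fin, nsmul_eq_mul]
          _ = ENNReal.ofReal δ := by
            rw [← ENNReal.ofReal_natCast nt, ← ENNReal.ofReal_mul (Nat.cast_nonneg nt)]
            congr 1
            field_simp
  -- conclude
  have hadd := measure_add_measure_compl (μ := P) hSmeas
  rw [measure_univ] at hadd
  have h1 : ENNReal.ofReal (1 - δ) + ENNReal.ofReal δ
      ≤ P {w | ∀ i : Fin nt, |Y i w| ≤ T} + ENNReal.ofReal δ := by
    rw [← ENNReal.ofReal_add (by linarith) hδ0.le, sub_add_cancel, ENNReal.ofReal_one, ← hadd]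
    exact add_le_add_right hcompl _
  exact (ENNReal.add_le_add_iff_right ENNReal.ofReal_ne_top).mp h1
end
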